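/- Let d ≥ 5. There exists a constant C ≥ 1 depending only on d such that for every x ∈ ℤ^d, C^{-1}·⟨x⟩^{-d+2} ≤ Σ_{y∈ℤ^d} ⟨y⟩^{-2d+4}·⟨x-y⟩^{-d+2} ≤ C·⟨x⟩^{-d+2}, where ⟨x⟩ = max(2, ‖x‖₁). -/

import Mathlib

open scoped BigOperators

/-- `⟨x⟩ = max(2, ‖x‖₁)` for `x ∈ ℤ^d`, as a real number. -/
noncomputable def latticeNorm {d : ℕ} (x : Fin d → ℤ) : ℝ :=
  max 2 (∑ i, |(x i : ℝ)|)

open Real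

lemma latticeNorm_ge_two {d : ℕ} (x : Fin d → ℤ) : 2 ≤ latticeNorm x := le_max_left _ _

lemma latticeNorm_pos {d : ℕ} (x : Fin d → ℤ) : 0 < latticeNorm x :=
  lt_of_lt_of_le (by norm_num) (latticeNorm_ge_two x)

lemma latticeNorm_zero {d : ℕ} : latticeNorm (0 : Fin d → ℤ) = 2 := by
  simp [latticeNorm]

lemma summable_int_max_rpow {b : ℝ} (hb : 1 < b) :
    Summable (fun m : ℤ => (max 2 |(m : ℝ)|) ^ (-b)) := by
  have hA : Summable (fun m : ℤ => |(m : ℝ)| ^ (-b)) := summable_abs_int_rpow hb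
  have hB : Summable (fun m : ℤ => if m = 0 then (2 : ℝ) ^ (-b) else 0) :=
    summable_of_ne_finset_zero (s := {0}) (fun m hm => if_neg (by simpa using hm))
  refine Summable.of_nonneg_of_le (fun m => Real.rpow_nonneg (le_trans (by norm_num) (le_max_left _ _)) _) ?_ (hA.add hB)
  intro m
  rcases eq_or_ne m 0 with h | h
  · subst h
    simp [Real.zero_rpow (by linarith : -b ≠ 0)]
  · have h1 : (1 : ℝ) ≤ |(m : ℝ)| := by
      have : (1 : ℤ) ≤ |m| := Int.one_le_abs (by exact_mod_cast h)
      calc (1:ℝ) ≤ |m| := by exact_mod_cast this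
        _ = |(m:ℝ)| := by push_cast; rfl
    have hle : (max 2 |(m : ℝ)|) ^ (-b) ≤ |(m : ℝ)| ^ (-b) :=
      Real.rpow_le_rpow_of_nonpos (by linarith) (le_max_right _ _) (by linarith)
    simp only [if_neg h, add_zero]
    exact hle

lemma summable_pi_max (d : ℕ) {b : ℝ} (hb : 1 < b) :
    Summable (fun y : Fin d → ℤ => ∏ i, (max 2 |(y i : ℝ)|) ^ (-b)) := by
  induction d with
  | zero =>
    exact Summable.of_finite
  | succ n ih =>
    have h1 := summable_int_max_rpow hb
    have h2 : Summable (fun p : ℤ × (Fin n → ℤ) =>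
        (max 2 |(p.1 : ℝ)|) ^ (-b) * ∏ i, (max 2 |(p.2 i : ℝ)|) ^ (-b)) := by
      refine Summable.mul_of_nonneg (f := fun m : ℤ => (max 2 |(m : ℝ)|) ^ (-b))
        (g := fun y : Fin n → ℤ => ∏ i, (max 2 |(y i : ℝ)|) ^ (-b)) h1 ih ?_ ?_
      · intro m
        exact Real.rpow_nonneg (by positivity) _
      · intro y
        exact Finset.prod_nonneg fun i _ => Real.rpow_nonneg (by positivity) _
    refine ((Fin.consEquiv (fun _ : Fin (n + 1) => ℤ)).summable_iff
      (f := fun y : Fin (n + 1) → ℤ => ∏ i, (max 2 |(y i : ℝ)|) ^ (-b))).mp ?_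
    refine h2.congr fun p => ?_
    simp only [Function.comp, Fin.consEquiv_apply]
    rw [Fin.prod_univ_succ]
    simp [Fin.cons]

lemma latticeNorm_rpow_le {d : ℕ} (hd : 0 < d) (y : Fin d → ℤ) {s : ℝ} (hs : 0 ≤ s) :
    latticeNorm y ^ (-s) ≤ ∏ i, (max 2 |(y i : ℝ)|) ^ (-(s / d)) := by
  have hL := latticeNorm_pos y
  have hprod : ∏ i, (max 2 |(y i : ℝ)|) ≤ latticeNorm y ^ (d : ℕ) := by
    calc ∏ i, (max 2 |(y i : ℝ)|) ≤ ∏ _i : Fin d, latticeNorm y := by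
          refine Finset.prod_le_prod (fun i _ => by positivity) (fun i _ => ?_)
          exact max_le_max le_rfl (Finset.single_le_sum
            (f := fun j => |(y j : ℝ)|) (fun j _ => abs_nonneg _) (Finset.mem_univ i))
      _ = latticeNorm y ^ (d : ℕ) := by simp [Finset.prod_const]
  have hppos : 0 < ∏ i, (max 2 |(y i : ℝ)|) :=
    Finset.prod_pos fun i _ => by positivity
  have hdne : ((d : ℝ)) ≠ 0 := ne_of_gt (by exact_mod_cast hd)
  have key : (latticeNorm y ^ (d : ℕ) : ℝ) ^ (-(s / d)) ≤ (∏ i, (max 2 |(y i : ℝ)|)) ^ (-(s / d)) :=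
    Real.rpow_le_rpow_of_nonpos hppos hprod (neg_nonpos.mpr (by positivity))
  have heq : latticeNorm y ^ (-s) = (latticeNorm y ^ (d : ℕ) : ℝ) ^ (-(s / d)) := by
    rw [← Real.rpow_natCast (latticeNorm y) d, ← Real.rpow_mul hL.le]
    congr 1
    field_simp
  calc latticeNorm y ^ (-s) = (latticeNorm y ^ (d : ℕ) : ℝ) ^ (-(s / d)) := heq
    _ ≤ (∏ i, (max 2 |(y i : ℝ)|)) ^ (-(s / d)) := key
    _ = ∏ i, (max 2 |(y i : ℝ)|) ^ (-(s / d)) :=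
        (Real.finset_prod_rpow _ _ (fun i _ => by positivity) _).symm

lemma summable_latticeNorm_rpow (d : ℕ) (hd : 5 ≤ d) :
    Summable (fun y : Fin d → ℤ => latticeNorm y ^ (-(2 * (d : ℝ) - 4))) := by
  have hd0 : 0 < d := by omega
  have hdr : (5 : ℝ) ≤ d := by exact_mod_cast hd
  have hb : 1 < (2 * (d : ℝ) - 4) / d := by
    rw [lt_div_iff₀ (by positivity)]
    linarith
  refine Summable.of_nonneg_of_le (fun y => Real.rpow_nonneg (latticeNorm_pos y).le _)
    (fun y => ?_) (summable_pi_max d hb)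
  exact latticeNorm_rpow_le hd0 y (by linarith)

lemma key_pointwise {a b c e : ℝ} (ha : 2 ≤ a) (hb : 2 ≤ b) (hc : 2 ≤ c)
    (he : 0 ≤ e) (htri : c ≤ a + b) :
    a ^ (-(2 * e)) * b ^ (-e) ≤ (2 / c) ^ e * (a ^ (-(2 * e)) + b ^ (-(2 * e))) := by
  have ha0 : (0:ℝ) < a := by linarith
  have hb0 : (0:ℝ) < b := by linarith
  have hc0 : (0:ℝ) < c := by linarith
  have hhalf : (0:ℝ) < c / 2 := by linarith
  have h2c : (0:ℝ) < 2 / c := by positivity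
  have hkey : (c / 2) ^ (-e) = (2 / c) ^ e := by
    have h21 : (2 / c) = (c / 2)⁻¹ := by rw [inv_div]
    rw [h21, Real.inv_rpow hhalf.le, ← Real.rpow_neg hhalf.le]
  rcases le_total a b with hab | hab
  · -- b ≥ c/2
    have hcb : c / 2 ≤ b := by linarith
    have h1 : b ^ (-e) ≤ (2 / c) ^ e := by
      rw [← hkey]
      exact Real.rpow_le_rpow_of_nonpos hhalf hcb (neg_nonpos.mpr he)
    calc a ^ (-(2 * e)) * b ^ (-e) ≤ a ^ (-(2 * e)) * (2 / c) ^ e :=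
          mul_le_mul_of_nonneg_left h1 (Real.rpow_nonneg ha0.le _)
      _ = (2 / c) ^ e * a ^ (-(2 * e)) := mul_comm _ _
      _ ≤ (2 / c) ^ e * (a ^ (-(2 * e)) + b ^ (-(2 * e))) := by
          apply mul_le_mul_of_nonneg_left _ (Real.rpow_nonneg h2c.le _)
          exact le_add_of_nonneg_right (Real.rpow_nonneg hb0.le _)
  · -- a ≥ c/2
    have hca : c / 2 ≤ a := by linarith
    have h1 : a ^ (-e) ≤ (2 / c) ^ e := by
      rw [← hkey]
      exact Real.rpow_le_rpow_of_nonpos hhalf hca (neg_nonpos.mpr he)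
    have hsplit : a ^ (-(2 * e)) = a ^ (-e) * a ^ (-e) := by
      rw [← Real.rpow_add ha0]; ring_nf
    have hsplitb : b ^ (-(2 * e)) = b ^ (-e) * b ^ (-e) := by
      rw [← Real.rpow_add hb0]; ring_nf
    have hAM : a ^ (-e) * b ^ (-e) ≤ a ^ (-(2 * e)) + b ^ (-(2 * e)) := by
      rw [hsplit, hsplitb]
      nlinarith [sq_nonneg (a ^ (-e) - b ^ (-e))]
    calc a ^ (-(2 * e)) * b ^ (-e) = a ^ (-e) * (a ^ (-e) * b ^ (-e)) := by
          rw [hsplit]; ring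
      _ ≤ (2 / c) ^ e * (a ^ (-(2 * e)) + b ^ (-(2 * e))) := by
          apply mul_le_mul h1 hAM (by positivity) (Real.rpow_nonneg h2c.le _)

lemma latticeNorm_triangle {d : ℕ} (x y : Fin d → ℤ) :
    latticeNorm x ≤ latticeNorm y + latticeNorm (x - y) := by
  have h1 : ∑ i, |(x i : ℝ)| ≤ ∑ i, |(y i : ℝ)| + ∑ i, |((x - y) i : ℝ)| := by
    rw [← Finset.sum_add_distrib]
    refine Finset.sum_le_sum fun i _ => ?_
    have : (x i : ℝ) = (y i : ℝ) + ((x - y) i : ℝ) := by push_cast [Pi.sub_apply]; ring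
    rw [this]
    exact abs_add_le _ _
  have h2 := latticeNorm_ge_two y
  have h3 := latticeNorm_ge_two (x - y)
  show max 2 (∑ i, |(x i : ℝ)|) ≤ latticeNorm y + latticeNorm (x - y)
  refine max_le (by linarith) ?_
  calc ∑ i, |(x i : ℝ)| ≤ ∑ i, |(y i : ℝ)| + ∑ i, |((x - y) i : ℝ)| := h1
    _ ≤ latticeNorm y + latticeNorm (x - y) :=
        add_le_add (le_max_right _ _) (le_max_right _ _)

/-- The bubble-diagram convolution estimate in dimension `d ≥ 5`:
`C⁻¹·⟨x⟩^{-d+2} ≤ Σ_{y∈ℤ^d} ⟨y⟩^{-2d+4}·⟨x-y⟩^{-d+2} ≤ C·⟨x⟩^{-d+2}`. -/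
theorem bubble_estimate_high_dim (d : ℕ) (hd : 5 ≤ d) :
    ∃ C : ℝ, 1 ≤ C ∧ ∀ x : Fin d → ℤ,
      C⁻¹ * latticeNorm x ^ (-(d : ℝ) + 2)
          ≤ (∑' y : Fin d → ℤ,
              latticeNorm y ^ (-2 * (d : ℝ) + 4) *
                latticeNorm (x - y) ^ (-(d : ℝ) + 2)) ∧
      (∑' y : Fin d → ℤ,
          latticeNorm y ^ (-2 * (d : ℝ) + 4) *
            latticeNorm (x - y) ^ (-(d : ℝ) + 2))
          ≤ C * latticeNorm x ^ (-(d : ℝ) + 2) := by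
  have hdr : (5 : ℝ) ≤ (d : ℝ) := by exact_mod_cast hd
  have hA : -2 * (d : ℝ) + 4 = -(2 * ((d : ℝ) - 2)) := by ring
  have hB : -(d : ℝ) + 2 = -((d : ℝ) - 2) := by ring
  simp only [hA, hB]
  set e : ℝ := (d : ℝ) - 2 with he_def
  have he0 : (0 : ℝ) ≤ e := by rw [he_def]; linarith
  have hS : Summable (fun y : Fin d → ℤ => latticeNorm y ^ (-(2 * e))) := by
    have hexp : -(2 * (d : ℝ) - 4) = -(2 * e) := by rw [he_def]; ring
    simpa only [hexp] using summable_latticeNorm_rpow d hd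
  set S := ∑' y : Fin d → ℤ, latticeNorm y ^ (-(2 * e)) with hS_def
  have hC1 : (1 : ℝ) ≤ 2 ^ (2 * e) :=
    Real.one_le_rpow (by norm_num) (by positivity)
  refine ⟨max (2 ^ (2 * e)) (2 ^ e * 2 * S), le_trans hC1 (le_max_left _ _), fun x => ?_⟩
  have hcx := latticeNorm_ge_two x
  have hc0 := latticeNorm_pos x
  have hS' : Summable (fun y : Fin d → ℤ => latticeNorm (x - y) ^ (-(2 * e))) := by
    have := (Equiv.subLeft x).summable_iff
      (f := fun z : Fin d → ℤ => latticeNorm z ^ (-(2 * e)))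
    exact this.mpr hS
  have htsum' : ∑' y : Fin d → ℤ, latticeNorm (x - y) ^ (-(2 * e)) = S := by
    rw [hS_def]
    simpa using (Equiv.subLeft x).tsum_eq (fun z : Fin d → ℤ => latticeNorm z ^ (-(2 * e)))
  have hbound : ∀ y : Fin d → ℤ,
      latticeNorm y ^ (-(2 * e)) * latticeNorm (x - y) ^ (-e)
        ≤ (2 / latticeNorm x) ^ e *
            (latticeNorm y ^ (-(2 * e)) + latticeNorm (x - y) ^ (-(2 * e))) :=
    fun y => key_pointwise (latticeNorm_ge_two y) (latticeNorm_ge_two _) hcx he0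
      (latticeNorm_triangle x y)
  have hG : Summable (fun y : Fin d → ℤ => (2 / latticeNorm x) ^ e *
      (latticeNorm y ^ (-(2 * e)) + latticeNorm (x - y) ^ (-(2 * e)))) :=
    (hS.add hS').mul_left _
  have hFnn : ∀ y : Fin d → ℤ,
      0 ≤ latticeNorm y ^ (-(2 * e)) * latticeNorm (x - y) ^ (-e) :=
    fun y => mul_nonneg (Real.rpow_nonneg (latticeNorm_pos _).le _)
      (Real.rpow_nonneg (latticeNorm_pos _).le _)
  have hF : Summable (fun y : Fin d → ℤ =>
      latticeNorm y ^ (-(2 * e)) * latticeNorm (x - y) ^ (-e)) :=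
    Summable.of_nonneg_of_le hFnn hbound hG
  constructor
  · -- lower bound
    have h0 : latticeNorm (0 : Fin d → ℤ) ^ (-(2 * e)) * latticeNorm (x - 0) ^ (-e)
        = 2 ^ (-(2 * e)) * latticeNorm x ^ (-e) := by
      rw [latticeNorm_zero, sub_zero]
    have hle := Summable.le_tsum hF 0 (fun y _ => hFnn y)
    rw [h0] at hle
    refine le_trans ?_ hle
    have hinv : (max (2 ^ (2 * e)) (2 ^ e * 2 * S))⁻¹ ≤ 2 ^ (-(2 * e)) := by
      rw [Real.rpow_neg (by norm_num : (0:ℝ) ≤ 2)]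
      exact inv_anti₀ (by positivity) (le_max_left _ _)
    exact mul_le_mul_of_nonneg_right hinv (Real.rpow_nonneg hc0.le _)
  · -- upper bound
    have h1 := Summable.tsum_le_tsum hbound hF hG
    have h2 : (∑' y : Fin d → ℤ, (2 / latticeNorm x) ^ e *
        (latticeNorm y ^ (-(2 * e)) + latticeNorm (x - y) ^ (-(2 * e))))
        = (2 / latticeNorm x) ^ e * (S + S) := by
      rw [tsum_mul_left, Summable.tsum_add hS hS', htsum']
    have h3 : (2 / latticeNorm x) ^ e * (S + S)
        = (2 ^ e * 2 * S) * latticeNorm x ^ (-e) := by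
      rw [Real.div_rpow (by norm_num) hc0.le, Real.rpow_neg hc0.le]
      have : (latticeNorm x ^ e) ≠ 0 := ne_of_gt (Real.rpow_pos_of_pos hc0 _)
      field_simp
      ring
    calc (∑' y : Fin d → ℤ, latticeNorm y ^ (-(2 * e)) * latticeNorm (x - y) ^ (-e))
        ≤ (2 ^ e * 2 * S) * latticeNorm x ^ (-e) := by rw [← h3, ← h2]; exact h1
      _ ≤ max (2 ^ (2 * e)) (2 ^ e * 2 * S) * latticeNorm x ^ (-e) :=
          mul_le_mul_of_nonneg_right (le_max_right _ _) (Real.rpow_nonneg hc0.le _)
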